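/- arXiv:2409.08785 — 4 statements merged into one kernel-verified Lean document; each statement's English description precedes it below -/
import Mathlib

section
/- In the ring of Witt vectors $W(\mathbb{F}_p[X^{1/p^\infty}, Y^{1/p^\infty}])$, write $[X] - [Y] = \sum_{n \geq 0} [P_n(X,Y)] p^n$ with $P_n(X,Y) \in \mathbb{F}_p[X^{1/p^\infty}, Y^{1/p^\infty}]$. Then $P_n(X,Y) \in \mathbb{F}_p[X^{1/p^n}, Y^{1/p^n}]$ and $X^{1/p^n} - Y^{1/p^n}$ divides $P_n(X,Y)$. -/
open WittVector

/-- The compatible `p^n`-th root `x^{1/p^n}` of an element of a perfect ring of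
characteristic `p`, given by iterating the inverse of the Frobenius equivalence. -/
noncomputable def pRoot (p : ℕ) {R : Type*} [CommRing R] [Fact p.Prime] [CharP R p]
    [PerfectRing R p] (n : ℕ) (x : R) : R :=
  (⇑(frobeniusEquiv R p).symm)^[n] x

section Aux

variable {p : ℕ} [hp : Fact p.Prime] {R : Type*} [CommRing R]

/-- `w * p^i = V^i (F^i w)` in characteristic `p`. -/
lemma aux_mul_pow_p [CharP R p] (i : ℕ) (w : WittVector p R) :
    w * (p : WittVector p R) ^ i = verschiebung^[i] (frobenius^[i] w) := by
  induction i with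
  | zero => simp
  | succ i ih =>
    rw [pow_succ, ← mul_assoc, ih, ← WittVector.verschiebung_frobenius,
      Function.iterate_succ_apply']
    congr 1
    rw [Function.iterate_succ_apply']
    exact (WittVector.verschiebung_frobenius_comm.symm).iterate_right i (frobenius^[i] w)

lemma coeff_iterate_verschiebung_lt (w : WittVector p R) {n i : ℕ} (h : n < i) :
    (verschiebung^[i] w).coeff n = 0 := by
  induction i generalizing n with
  | zero => omega
  | succ i ih =>
    rw [Function.iterate_succ_apply']
    cases n with
    | zero => exact WittVector.verschiebung_coeff_zero _
    | succ n => rw [WittVector.verschiebung_coeff_succ]; exact ih (by omega)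

lemma coeff_pow_p_mul_teichmuller [CharP R p] (i n : ℕ) (r : R) :
    ((p : WittVector p R) ^ i * teichmuller p r).coeff n =
      if n = i then r ^ p ^ i else 0 := by
  rw [mul_comm, aux_mul_pow_p]
  split_ifs with h
  · subst h
    have h0 := WittVector.iterate_verschiebung_coeff
      (frobenius^[n] (teichmuller p r) : WittVector p R) n 0
    rw [zero_add] at h0
    rw [h0, WittVector.iterate_frobenius_coeff, WittVector.teichmuller_coeff_zero]
  · rcases lt_or_gt_of_ne h with hlt | hgt
    · exact coeff_iterate_verschiebung_lt _ hlt
    · have h0 := WittVector.iterate_verschiebung_coeff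
        (frobenius^[i] (teichmuller p r) : WittVector p R) i (n - i)
      rw [show n - i + i = n by omega] at h0
      rw [h0, WittVector.iterate_frobenius_coeff,
        WittVector.teichmuller_coeff_pos p r (n - i) (by omega),
        zero_pow (pow_ne_zero _ hp.out.ne_zero)]

lemma sum_pow_p_teichmuller_coeff [CharP R p] (b : ℕ → R) :
    ∀ N n : ℕ,
      (∑ i ∈ Finset.range N, (p : WittVector p R) ^ i * teichmuller p (b i)).coeff n =
        if n < N then b n ^ p ^ n else 0 := by
  intro N
  induction N with
  | zero => intro n; simp
  | succ N ih =>
    intro n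
    have hdisj : ∀ m,
        (∑ i ∈ Finset.range N, (p : WittVector p R) ^ i * teichmuller p (b i)).coeff m = 0 ∨
        ((p : WittVector p R) ^ N * teichmuller p (b N)).coeff m = 0 := by
      intro m
      by_cases hm : m < N
      · right; rw [coeff_pow_p_mul_teichmuller]; exact if_neg (by omega)
      · left; rw [ih m]; exact if_neg hm
    rw [Finset.sum_range_succ, WittVector.coeff_add_of_disjoint _ _ _ hdisj, ih n,
      coeff_pow_p_mul_teichmuller]
    rcases lt_trichotomy n N with h1 | h1 | h1
    · rw [if_pos h1, if_neg (show ¬n = N by omega), add_zero,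
        if_pos (show n < N + 1 by omega)]
    · subst h1
      rw [if_neg (lt_irrefl n), if_pos rfl, zero_add, if_pos (Nat.lt_succ_self n)]
    · rw [if_neg (show ¬n < N by omega), if_neg (show ¬n = N by omega), add_zero,
        if_neg (show ¬n < N + 1 by omega)]

lemma polynomial_eval₂_mem {A B : Type*} [CommRing A] [CommRing B] (f : A →+* B)
    (s : Subring B) (hf : ∀ a, f a ∈ s) {t : B} (ht : t ∈ s) (q : Polynomial A) :
    q.eval₂ f t ∈ s := by
  induction q using Polynomial.induction_on' with
  | add r q hr hq => rw [Polynomial.eval₂_add]; exact s.add_mem hr hq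
  | monomial k a =>
    rw [Polynomial.eval₂_monomial]
    exact s.mul_mem (hf a) (s.pow_mem ht k)

/-- Evaluation `ℤ[X][Y] → R`, `X ↦ x`, `Y ↦ y`. -/
noncomputable def evXY {R : Type*} [CommRing R] (x y : R) : Polynomial (Polynomial ℤ) →+* R :=
  Polynomial.eval₂RingHom (Polynomial.eval₂RingHom (Int.castRingHom R) x) y

lemma evXY_CX (x y : R) : evXY x y (Polynomial.C Polynomial.X) = x := by
  simp [evXY, Polynomial.coe_eval₂RingHom, Polynomial.eval₂_C, Polynomial.eval₂_X]

lemma evXY_X (x y : R) : evXY x y Polynomial.X = y := by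
  simp [evXY, Polynomial.coe_eval₂RingHom, Polynomial.eval₂_X]

lemma evXY_mem (x y : R) (s : Polynomial (Polynomial ℤ)) :
    evXY x y s ∈ Subring.closure {x, y} := by
  refine polynomial_eval₂_mem _ _ ?_ ?_ s
  · intro a
    refine polynomial_eval₂_mem _ _ ?_ ?_ a
    · intro k; exact intCast_mem _ k
    · exact Subring.subset_closure (Set.mem_insert _ _)
  · exact Subring.subset_closure (Set.mem_insert_of_mem _ rfl)

/-- The key universal statement: the `n`-th Witt coefficient of `[x] - [y]` is
`(x - y) * c` for some `c` in the subring generated by `x` and `y`. -/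
lemma teichmuller_sub_coeff_factor (p : ℕ) [Fact p.Prime] (x y : R) (n : ℕ) :
    ∃ c ∈ Subring.closure {x, y},
      (teichmuller p x - teichmuller p y).coeff n = (x - y) * c := by
  obtain ⟨c0, hc0⟩ : (Polynomial.X - Polynomial.C Polynomial.X : Polynomial (Polynomial ℤ)) ∣
      (teichmuller p (Polynomial.C Polynomial.X : Polynomial (Polynomial ℤ)) -
        teichmuller p Polynomial.X).coeff n := by
    rw [Polynomial.dvd_iff_isRoot]
    have hm := WittVector.map_coeff (Polynomial.evalRingHom (Polynomial.X : Polynomial ℤ))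
      (teichmuller p (Polynomial.C Polynomial.X : Polynomial (Polynomial ℤ)) -
        teichmuller p Polynomial.X) n
    rw [map_sub, WittVector.map_teichmuller, WittVector.map_teichmuller] at hm
    simp only [Polynomial.coe_evalRingHom, Polynomial.eval_C, Polynomial.eval_X, sub_self,
      WittVector.zero_coeff] at hm
    exact hm.symm
  have hevq : (teichmuller p x - teichmuller p y).coeff n =
      evXY x y ((teichmuller p (Polynomial.C Polynomial.X : Polynomial (Polynomial ℤ)) -
        teichmuller p Polynomial.X).coeff n) := by
    have hm := WittVector.map_coeff (evXY x y)
      (teichmuller p (Polynomial.C Polynomial.X : Polynomial (Polynomial ℤ)) -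
        teichmuller p Polynomial.X) n
    rw [map_sub, WittVector.map_teichmuller, WittVector.map_teichmuller, evXY_CX, evXY_X] at hm
    exact hm
  refine ⟨-(evXY x y c0), Subring.neg_mem _ (evXY_mem x y c0), ?_⟩
  rw [hevq, hc0, map_mul, map_sub, evXY_X, evXY_CX]
  ring

end Aux

section Root

variable (p : ℕ) [Fact p.Prime] (R : Type*) [CommRing R] [CharP R p] [PerfectRing R p]

lemma frobeniusEquivSymmPow_apply (n : ℕ) (a : R) :
    (((frobeniusEquiv R p).symm ^ n : R ≃+* R) a) = (⇑(frobeniusEquiv R p).symm)^[n] a := by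
  induction n generalizing a with
  | zero => rw [pow_zero]; rfl
  | succ n ih =>
    rw [pow_succ, Function.iterate_succ_apply]
    exact ih ((frobeniusEquiv R p).symm a)

lemma pRoot_pow_p_pow (n : ℕ) (a : R) : pRoot p n (a ^ p ^ n) = a := by
  induction n generalizing a with
  | zero => simp [pRoot]
  | succ n ih =>
    rw [pRoot, pow_succ, pow_mul, Function.iterate_succ_apply]
    have h1 : (frobeniusEquiv R p).symm ((a ^ p ^ n) ^ p) = a ^ p ^ n := by
      have := frobeniusEquiv_symm_apply_frobenius R p (a ^ p ^ n)
      rwa [frobenius_def] at this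
    rw [h1]
    exact ih a

end Root

/-- In the ring of Witt vectors of a perfect ring `R` of characteristic
`p` (e.g. the perfect polynomial ring `𝔽_p[X^{1/p^∞}, Y^{1/p^∞}]`, with `x = X`, `y = Y`),
write `[x] - [y] = ∑_{n ≥ 0} [P n] pⁿ` (the Teichmüller expansion, characterized by
agreement of all truncations with the partial sums). Then each `P n` lies in the subring
generated by `x^{1/pⁿ}` and `y^{1/pⁿ}` (the analogue of `𝔽_p[X^{1/pⁿ}, Y^{1/pⁿ}]`), and
`x^{1/pⁿ} - y^{1/pⁿ}` divides `P n` in that subring. -/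
theorem stmt5 (p : ℕ) [Fact p.Prime] (R : Type*) [CommRing R] [CharP R p] [PerfectRing R p]
    (x y : R) (P : ℕ → R)
    (hP : ∀ N : ℕ,
      WittVector.truncate N (teichmuller p x - teichmuller p y) =
        WittVector.truncate N
          (∑ i ∈ Finset.range N, (p : WittVector p R) ^ i * teichmuller p (P i))) :
    ∀ n : ℕ,
      P n ∈ Subring.closure {pRoot p n x, pRoot p n y} ∧
        ∃ c ∈ Subring.closure {pRoot p n x, pRoot p n y},
          P n = (pRoot p n x - pRoot p n y) * c := by
  intro n
  -- Step 1: the n-th Witt coefficient of [x] - [y] is (P n)^(p^n).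
  have hco : (teichmuller p x - teichmuller p y).coeff n = P n ^ p ^ n := by
    have h := congrArg (TruncatedWittVector.coeff (⟨n, Nat.lt_succ_self n⟩ : Fin (n + 1)))
      (hP (n + 1))
    rw [WittVector.coeff_truncate, WittVector.coeff_truncate] at h
    simpa [sum_pow_p_teichmuller_coeff] using h
  -- Step 2: the universal factorization of that coefficient.
  obtain ⟨c, hcmem, hc⟩ := teichmuller_sub_coeff_factor p x y n
  -- Step 3: apply the inverse Frobenius n times.
  set ψ : R ≃+* R := (frobeniusEquiv R p).symm ^ n with hψdef
  have hψ : ∀ a : R, ψ a = pRoot p n a := fun a => frobeniusEquivSymmPow_apply p R n a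
  have hPn : P n = (pRoot p n x - pRoot p n y) * ψ c := by
    have h1 : P n = ψ (P n ^ p ^ n) := by rw [hψ, pRoot_pow_p_pow]
    rw [h1, ← hco, hc, map_mul, map_sub, hψ, hψ]
  have hcmem' : ψ c ∈ Subring.closure {pRoot p n x, pRoot p n y} := by
    have h2 : ψ c ∈ (Subring.closure {x, y}).map (ψ : R →+* R) :=
      Subring.mem_map.mpr ⟨c, hcmem, rfl⟩
    rw [RingHom.map_closure, Set.image_pair] at h2
    have h3 : (ψ : R →+* R) x = pRoot p n x := hψ x
    have h4 : (ψ : R →+* R) y = pRoot p n y := hψ y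
    rwa [h3, h4] at h2
  have hxm : pRoot p n x ∈ Subring.closure {pRoot p n x, pRoot p n y} :=
    Subring.subset_closure (Set.mem_insert _ _)
  have hym : pRoot p n y ∈ Subring.closure {pRoot p n x, pRoot p n y} :=
    Subring.subset_closure (Set.mem_insert_of_mem _ rfl)
  refine ⟨?_, ψ c, hcmem', hPn⟩
  rw [hPn]
  exact Subring.mul_mem _ (Subring.sub_mem _ hxm hym) hcmem'
end

section
/- Let $C$ be an algebraically closed perfectoid field of characteristic $0$ containing $\mathbb{Q}_p$, with ring of integers $\mathcal{O}_C$, tilt $C^\flat$ with valuation $\nu$ normalized by $\nu(\varpi) = 1$ for $\varpi = (p, p^{1/p}, \dots)$, and let $\epsilon = (1, \zeta_p, \zeta_{p^2}, \dots) \in C^\flat$ be given by a compatible system of primitive $p$-power roots of unity. Write $u = [\epsilon^{1/p}] - 1 = \sum_{n \geq 0} [u_n] p^n$ in $A_{inf} = W(\mathcal{O}_C^\flat)$. Then $u_0 = \epsilon^{1/p} - 1$ and $\nu(u_n) \geq \frac{1}{p^n(p-1)}$ for all $n \geq 0$. -/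
open WittVector

section aux

variable {p : ℕ} [Fact p.Prime] {R : Type*} [CommRing R] [CharP R p] [PerfectRing R p]

lemma pRoot_pow (n : ℕ) (x : R) : (pRoot p n x) ^ p ^ n = x := by
  induction n generalizing x with
  | zero => simp [pRoot]
  | succ n ih =>
    have h : pRoot p (n + 1) x = pRoot p n ((frobeniusEquiv R p).symm x) := by
      simp [pRoot, Function.iterate_succ_apply]
    rw [h, pow_succ, pow_mul, ih, frobeniusEquiv_symm_pow_p]

lemma pow_p_pow_eq_zero {t : R} {m : ℕ} (h : t ^ p ^ m = 0) : t = 0 := by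
  induction m generalizing t with
  | zero => simpa using h
  | succ m ih =>
    rw [pow_succ', pow_mul] at h
    have h1 : t ^ p = 0 := ih h
    have h0 : frobeniusEquiv R p t = frobeniusEquiv R p 0 := by
      rw [frobeniusEquiv_def, frobeniusEquiv_def, h1,
        zero_pow (Fact.out : p.Prime).ne_zero]
    exact (frobeniusEquiv R p).injective h0

variable (v : AddValuation R (WithTop ℝ))

lemma v_natCast_nonneg (n : ℕ) : 0 ≤ v (n : R) := by
  induction n with
  | zero => simp [v.map_zero]
  | succ n ih =>
    push_cast
    refine v.map_le_add ih ?_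
    simp [v.map_one]

lemma v_intCast_nonneg (m : ℤ) : 0 ≤ v (m : R) := by
  rcases Int.natAbs_eq m with h | h
  · rw [h, Int.cast_natCast]; exact v_natCast_nonneg v _
  · rw [h, Int.cast_neg, Int.cast_natCast, v.map_neg]; exact v_natCast_nonneg v _

lemma v_poly_nonneg {a : R} (ha : 0 ≤ v a) (q : Polynomial ℤ) :
    0 ≤ v (Polynomial.aeval a q) := by
  induction q using Polynomial.induction_on' with
  | add q r hq hr => rw [map_add]; exact v.map_le_add hq hr
  | monomial n c =>
    rw [Polynomial.aeval_monomial, v.map_mul, v.map_pow]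
    have h1 : 0 ≤ v (algebraMap ℤ R c) := by
      simpa [algebraMap_int_eq, eq_intCast] using v_intCast_nonneg v c
    exact add_nonneg h1 (nsmul_nonneg ha n)

lemma v_aeval_sub_const {σ : Type*} {δ : WithTop ℝ} (hδ : 0 ≤ δ) {f : σ → R}
    (hf : ∀ i, δ ≤ v (f i)) (φ : MvPolynomial σ ℤ) :
    δ ≤ v (MvPolynomial.aeval f φ - ((MvPolynomial.constantCoeff φ : ℤ) : R)) := by
  induction φ using MvPolynomial.induction_on with
  | C a => simp [MvPolynomial.aeval_C, algebraMap_int_eq, eq_intCast, v.map_zero]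
  | add φ ψ hφ hψ =>
    rw [map_add, map_add]
    push_cast
    rw [← sub_add_sub_comm]
    exact v.map_le_add hφ hψ
  | mul_X φ i hφ =>
    rw [map_mul, MvPolynomial.aeval_X]
    have hc0 : MvPolynomial.constantCoeff (φ * MvPolynomial.X i) = 0 := by simp
    rw [hc0]
    push_cast
    rw [sub_zero]
    set c : R := ((MvPolynomial.constantCoeff φ : ℤ) : R) with hc
    have hsplit : MvPolynomial.aeval f φ * f i = (MvPolynomial.aeval f φ - c) * f i + c * f i := by
      ring
    rw [hsplit]
    refine v.map_le_add ?_ ?_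
    · rw [v.map_mul]
      exact (hf i).trans (le_add_of_nonneg_left (hδ.trans hφ))
    · rw [v.map_mul]
      exact (hf i).trans (le_add_of_nonneg_left (v_intCast_nonneg v _))

end aux

section witt

variable {p : ℕ} [hp : Fact p.Prime] {R : Type*} [CommRing R] [CharP R p]

lemma mul_pow_p_eq (x : WittVector p R) (n : ℕ) :
    x * (p : WittVector p R) ^ n = verschiebung^[n] (frobenius^[n] x) := by
  induction n generalizing x with
  | zero => simp
  | succ n ih =>
    calc x * (p : WittVector p R) ^ (n + 1) = (x * p) * (p : WittVector p R) ^ n := by ring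
    _ = verschiebung^[n] (frobenius^[n] (verschiebung (frobenius x))) := by
        rw [← verschiebung_frobenius x, ih]
    _ = verschiebung^[n] (verschiebung (frobenius^[n] (frobenius x))) := by
        rw [← (verschiebung_frobenius_comm.iterate_right n) (frobenius x)]
    _ = verschiebung^[n + 1] (frobenius^[n + 1] x) := rfl

lemma mul_pow_p_coeff_add (x : WittVector p R) (n k : ℕ) :
    (x * (p : WittVector p R) ^ n).coeff (k + n) = x.coeff k ^ p ^ n := by
  rw [mul_pow_p_eq, iterate_verschiebung_coeff, iterate_frobenius_coeff]

lemma iterate_verschiebung_coeff_of_lt (y : WittVector p R) {n i : ℕ} (h : i < n) :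
    (verschiebung^[n] y).coeff i = 0 := by
  induction n generalizing i with
  | zero => omega
  | succ n ih =>
    rw [Function.iterate_succ_apply']
    cases i with
    | zero => exact verschiebung_coeff_zero _
    | succ j => rw [verschiebung_coeff_succ]; exact ih (by omega)

lemma mul_pow_p_coeff_lt (x : WittVector p R) {n i : ℕ} (h : i < n) :
    (x * (p : WittVector p R) ^ n).coeff i = 0 := by
  rw [mul_pow_p_eq]
  exact iterate_verschiebung_coeff_of_lt _ h

lemma exists_div_pow_p [PerfectRing R p] (z : WittVector p R) (n : ℕ)
    (hz : ∀ i < n, z.coeff i = 0) :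
    ∃ w : WittVector p R, z = w * (p : WittVector p R) ^ n ∧
      ∀ k, w.coeff k = pRoot p n (z.coeff (n + k)) := by
  refine ⟨WittVector.mk p (fun k => pRoot p n (z.coeff (n + k))), ?_, fun k => by
    rw [WittVector.coeff_mk]⟩
  ext j
  rcases lt_or_ge j n with hj | hj
  · rw [hz j hj, mul_pow_p_coeff_lt _ hj]
  · obtain ⟨k, rfl⟩ : ∃ k, j = k + n := ⟨j - n, (Nat.sub_add_cancel hj).symm⟩
    rw [mul_pow_p_coeff_add, WittVector.coeff_mk, pRoot_pow, Nat.add_comm]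

end witt

lemma withtop_nsmul_coe (m : ℕ) (r : ℝ) :
    m • ((r : WithTop ℝ)) = ((m • r : ℝ) : WithTop ℝ) := by
  induction m with
  | zero => simp
  | succ m ih => rw [succ_nsmul, succ_nsmul, ih]; push_cast; ring

lemma withtop_le_of_nsmul {m : ℕ} (hm : 0 < m) {c : ℝ} {t : WithTop ℝ}
    (h : ((m • c : ℝ) : WithTop ℝ) ≤ m • t) : (c : WithTop ℝ) ≤ t := by
  induction t using WithTop.recTopCoe with
  | top => exact le_top
  | coe r =>
    rw [withtop_nsmul_coe] at h
    rw [WithTop.coe_le_coe] at h ⊢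
    have hm' : (0 : ℝ) < m := by exact_mod_cast hm
    rw [nsmul_eq_mul, nsmul_eq_mul] at h
    exact le_of_mul_le_mul_left h hm'


set_option maxHeartbeats 1000000 in
/-- Let `𝒪_C^♭` be the tilt of the ring of integers of an algebraically
closed perfectoid field `C ⊇ ℚ_p`: a perfect ring `R` of characteristic `p`, with the
additive valuation `v` (normalized by `v(ϖ) = 1`, `ϖ = (p, p^{1/p}, …)`), and let
`ε = (1, ζ_p, ζ_{p²}, …) ∈ R` be given by a compatible system of primitive `p`-power
roots of unity, so that `v(ε^{1/pⁿ} - 1) = 1/(p^{n-1}(p-1))` for `n ≥ 1`.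
Write `u = [ε^{1/p}] - 1 = ∑_{n ≥ 0} [u n] pⁿ` in `A_inf = W(R)` (the Teichmüller
expansion, characterized by agreement of all truncations with the partial sums).
Then `u 0 = ε^{1/p} - 1` and `v (u n) ≥ 1/(pⁿ(p-1))` for all `n ≥ 0`. -/
theorem stmt6 (p : ℕ) [Fact p.Prime] (R : Type*) [CommRing R] [CharP R p] [PerfectRing R p]
    (v : AddValuation R (WithTop ℝ)) (ε : R)
    (hε : ∀ n : ℕ, v (pRoot p (n + 1) ε - 1) =
      ((1 / (p ^ n * (p - 1)) : ℝ) : WithTop ℝ))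
    (u : ℕ → R)
    (hu : ∀ N : ℕ,
      WittVector.truncate N (teichmuller p (pRoot p 1 ε) - 1) =
        WittVector.truncate N
          (∑ i ∈ Finset.range N, (p : WittVector p R) ^ i * teichmuller p (u i))) :
    u 0 = pRoot p 1 ε - 1 ∧
      ∀ n : ℕ, ((1 / (p ^ n * (p - 1)) : ℝ) : WithTop ℝ) ≤ v (u n) := by
  have hp : p.Prime := Fact.out
  have hpR : (1 : ℝ) < (p : ℝ) := by exact_mod_cast hp.one_lt
  set a : R := pRoot p 1 ε with ha
  set x : WittVector p R := teichmuller p a - 1 with hx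
  set S : ℕ → WittVector p R :=
    fun N => ∑ i ∈ Finset.range N, (p : WittVector p R) ^ i * teichmuller p (u i) with hS
  have hδpos : ∀ n : ℕ, (0 : ℝ) < 1 / ((p : ℝ) ^ n * ((p : ℝ) - 1)) := by
    intro n
    have h1 : (0 : ℝ) < (p : ℝ) ^ n := by positivity
    have h2 : (0 : ℝ) < (p : ℝ) - 1 := by linarith
    positivity
  have hδ0 : ∀ n : ℕ,
      (0 : WithTop ℝ) ≤ ((1 / ((p : ℝ) ^ n * ((p : ℝ) - 1)) : ℝ) : WithTop ℝ) := by
    intro n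
    rw [← WithTop.coe_zero]
    exact WithTop.coe_le_coe.mpr (hδpos n).le
  -- kernel facts
  have hker : ∀ N : ℕ, ∀ i < N, (x - S N).coeff i = 0 := by
    intro N
    have h0 : WittVector.truncate N (x - S N) = 0 := by
      rw [map_sub, hu N, sub_self]
    exact (WittVector.mem_ker_truncate (n := N) (x - S N)).mp (RingHom.mem_ker.mpr h0)
  -- coeff 0 of x
  have hx0 : x.coeff 0 = a - 1 := by
    show WittVector.constantCoeff x = a - 1
    rw [hx, map_sub, map_one, WittVector.constantCoeff_apply, teichmuller_coeff_zero]
  -- u 0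
  have hu0 : u 0 = a - 1 := by
    have h1 := congrArg (fun t => TruncatedWittVector.coeff (⟨0, by norm_num⟩ : Fin 1) t) (hu 1)
    simp only [WittVector.coeff_truncate] at h1
    rw [Finset.sum_range_one, pow_zero, one_mul] at h1
    rw [teichmuller_coeff_zero] at h1
    rw [← h1]
    exact hx0
  -- v a ≥ 0
  have hva1 : v (a - 1) = ((1 / ((p : ℝ) ^ 0 * ((p : ℝ) - 1)) : ℝ) : WithTop ℝ) := hε 0
  have hva : 0 ≤ v a := by
    have hrw : a = (a - 1) + 1 := by ring
    rw [hrw]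
    refine v.map_le_add ?_ ?_
    · rw [hva1]; exact hδ0 0
    · rw [v.map_one]
  -- base coefficient bound
  have hxcoeff : ∀ k : ℕ,
      ((1 / ((p : ℝ) ^ 0 * ((p : ℝ) - 1)) : ℝ) : WithTop ℝ) ≤ v (x.coeff k) := by
    intro k
    set g : Polynomial ℤ →+* R := (Polynomial.aeval a).toRingHom with hg
    have hga : g Polynomial.X = a := by simp [hg]
    set X' : WittVector p (Polynomial ℤ) := teichmuller p Polynomial.X - 1 with hX'
    have hmap : WittVector.map g X' = x := by
      rw [hX', map_sub, map_one, WittVector.map_teichmuller, hga]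
    set q : Polynomial ℤ := X'.coeff k with hq
    have hq1 : Polynomial.eval 1 q = 0 := by
      have h0 : WittVector.map (Polynomial.evalRingHom (1 : ℤ)) X' = 0 := by
        rw [hX', map_sub, map_one, WittVector.map_teichmuller]
        simp
      have h1 := congrArg (fun t => WittVector.coeff t k) h0
      simpa [WittVector.map_coeff] using h1
    obtain ⟨q', hq'⟩ : (Polynomial.X - Polynomial.C (1 : ℤ)) ∣ q :=
      Polynomial.dvd_iff_isRoot.mpr hq1
    have hxk : x.coeff k = (a - 1) * (Polynomial.aeval a q') := by
      rw [← hmap, WittVector.map_coeff, ← hq, hq', map_mul]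
      congr 1
      rw [map_sub, hga]
      simp
    rw [hxk, v.map_mul, hva1]
    exact le_add_of_nonneg_right (v_poly_nonneg v hva q')
  -- subtraction bound
  have hsub : ∀ (δ' : WithTop ℝ), 0 ≤ δ' → ∀ y z : WittVector p R,
      (∀ k, δ' ≤ v (y.coeff k)) → (∀ k, δ' ≤ v (z.coeff k)) →
      ∀ k, δ' ≤ v ((y - z).coeff k) := by
    intro δ' hδ' y z hy hz k
    rw [WittVector.sub_coeff]
    have hf : ∀ i : Fin 2 × ℕ, δ' ≤ v (Function.uncurry ![y.coeff, z.coeff] i) := by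
      rintro ⟨j, i⟩
      fin_cases j
      · simpa [Function.uncurry] using hy i
      · simpa [Function.uncurry] using hz i
    have h := v_aeval_sub_const v hδ' hf (wittSub p k)
    simpa [WittVector.peval, constantCoeff_wittSub] using h
  -- main induction
  have main : ∀ n : ℕ, ∃ w : WittVector p R,
      x - S n = w * (p : WittVector p R) ^ n ∧ w.coeff 0 = u n ∧
      ∀ k, ((1 / ((p : ℝ) ^ n * ((p : ℝ) - 1)) : ℝ) : WithTop ℝ) ≤ v (w.coeff k) := by
    intro n
    induction n with
    | zero =>
      refine ⟨x, by simp [hS], ?_, hxcoeff⟩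
      rw [hx0, hu0]
    | succ n ih =>
      obtain ⟨w, hw, hw0, hwv⟩ := ih
      set w1 : WittVector p R := w - teichmuller p (u n) with hw1
      have hz1 : x - S (n + 1) = w1 * (p : WittVector p R) ^ n := by
        have hSs : S (n + 1) = S n + (p : WittVector p R) ^ n * teichmuller p (u n) :=
          Finset.sum_range_succ _ _
      -- x - S (n+1) = (x - S n) - p^n * teich
        have : x - S (n + 1) = (x - S n) - (p : WittVector p R) ^ n * teichmuller p (u n) := by
          rw [hSs]; ring
        rw [this, hw, hw1]; ring
      have hw1v : ∀ k, ((1 / ((p : ℝ) ^ n * ((p : ℝ) - 1)) : ℝ) : WithTop ℝ) ≤ v (w1.coeff k) := by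
        refine hsub _ (hδ0 n) _ _ hwv ?_
        intro k
        cases k with
        | zero =>
          rw [teichmuller_coeff_zero, ← hw0]
          exact hwv 0
        | succ k =>
          rw [teichmuller_coeff_pos p (u n) (k + 1) (Nat.succ_pos k), v.map_zero]
          exact le_top
      have hw10 : w1.coeff 0 = 0 := by
        show WittVector.constantCoeff w1 = 0
        rw [hw1, map_sub, WittVector.constantCoeff_apply, WittVector.constantCoeff_apply,
          teichmuller_coeff_zero, hw0, sub_self]
      obtain ⟨w', hw', hw'c⟩ := exists_div_pow_p w1 1 (by
        intro i hi
        interval_cases i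
        exact hw10)
      have hz2 : x - S (n + 1) = w' * (p : WittVector p R) ^ (n + 1) := by
        rw [hz1, hw', pow_succ]; ring
      refine ⟨w', hz2, ?_, ?_⟩
      · -- w'.coeff 0 = u (n+1)
        have hz3 : x - S (n + 2) =
            (w' - teichmuller p (u (n + 1))) * (p : WittVector p R) ^ (n + 1) := by
          have hSs : S (n + 2) = S (n + 1) + (p : WittVector p R) ^ (n + 1) * teichmuller p (u (n + 1)) :=
            Finset.sum_range_succ _ _
          have : x - S (n + 2) = (x - S (n + 1)) - (p : WittVector p R) ^ (n + 1) * teichmuller p (u (n + 1)) := by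
            rw [hSs]; ring
          rw [this, hz2]; ring
        have h0 : (x - S (n + 2)).coeff (0 + (n + 1)) =
            ((w' - teichmuller p (u (n + 1))).coeff 0) ^ p ^ (n + 1) := by
          rw [hz3, mul_pow_p_coeff_add]
        rw [hker (n + 2) (0 + (n + 1)) (by omega)] at h0
        have hc0 : (w' - teichmuller p (u (n + 1))).coeff 0 = 0 :=
          pow_p_pow_eq_zero h0.symm
        have hsub0 : (w' - teichmuller p (u (n + 1))).coeff 0 = w'.coeff 0 - u (n + 1) := by
          show WittVector.constantCoeff (w' - teichmuller p (u (n + 1))) = w'.coeff 0 - u (n + 1)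
          rw [map_sub, WittVector.constantCoeff_apply, WittVector.constantCoeff_apply,
            teichmuller_coeff_zero]
        have hc1 : w'.coeff 0 - u (n + 1) = 0 := by rw [← hsub0, hc0]
        exact sub_eq_zero.mp hc1
      · -- valuation bound
        intro k
        have hle : ((1 / ((p : ℝ) ^ n * ((p : ℝ) - 1)) : ℝ) : WithTop ℝ) ≤
            (p ^ 1) • v (w'.coeff k) := by
          rw [← v.map_pow, hw'c k, pRoot_pow]
          exact hw1v (1 + k)
        refine withtop_le_of_nsmul (m := p ^ 1) (pow_pos hp.pos 1) ?_
        have harith : (p ^ 1 : ℕ) • (1 / ((p : ℝ) ^ (n + 1) * ((p : ℝ) - 1)))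
            = 1 / ((p : ℝ) ^ n * ((p : ℝ) - 1)) := by
          have h2 : (0 : ℝ) < (p : ℝ) - 1 := by linarith
          have h3 : (p : ℝ) ≠ 0 := by positivity
          rw [nsmul_eq_mul]
          push_cast
          field_simp
          ring
        rw [harith]
        exact hle
  constructor
  · exact hu0
  · intro n
    obtain ⟨w, -, hw0, hwv⟩ := main n
    rw [← hw0]
    exact hwv 0
end

section
/- Let $B$ be a $p$-adically complete and separated commutative ring and let $B\langle U \rangle_{pd}$ denote the $p$-adic completion of the divided power polynomial algebra $B[U]_{pd}$ over $B$ in one variable. Let $b \in B$ be topologically nilpotent. Then the complex $0 \to B \to B\langle U \rangle_{pd} \xrightarrow{(1+bU)\frac{\partial}{\partial U}} B\langle U \rangle_{pd} \to 0$ is exact, where $\frac{\partial}{\partial U}$ is the divided-power derivative sending $U^{[n]}$ to $U^{[n-1]}$. -/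
/- We model the `p`-adic completion `B⟨U⟩_pd` of the free divided power algebra `B[U]_pd`
by coefficient sequences: an element `∑ bₙ U^[n]` is the sequence `n ↦ bₙ`, and it lies in
the completion iff the coefficients tend to `0` `p`-adically. Multiplication is determined
by `U^[m] U^[n] = (m+n choose n) U^[m+n]`. -/

/-- Multiplication of divided power series: `(f*g)ₙ = ∑_{i+j=n} (n choose i) fᵢ gⱼ`. -/
def pdMul {B : Type*} [CommRing B] (f g : ℕ → B) : ℕ → B :=
  fun n => ∑ ij ∈ Finset.HasAntidiagonal.antidiagonal n, (n.choose ij.1 : B) * f ij.1 * g ij.2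

/-- The constant divided power series `b`. -/
def pdC {B : Type*} [CommRing B] (b : B) : ℕ → B :=
  fun n => if n = 0 then b else 0

/-- The divided power derivative `∂/∂U`, sending `U^[n]` to `U^[n-1]`. -/
def pdDeriv {B : Type*} [CommRing B] (f : ℕ → B) : ℕ → B :=
  fun n => f (n + 1)

/-- The element `1 + bU` of the divided power series ring. -/
def pdOnePlusBU {B : Type*} [CommRing B] (b : B) : ℕ → B :=
  fun n => if n = 0 then 1 else if n = 1 then b else 0

/-- The operator `(1 + bU) ∂/∂U`. -/
def pdOpL {B : Type*} [CommRing B] (b : B) (f : ℕ → B) : ℕ → B :=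
  pdMul (pdOnePlusBU b) (pdDeriv f)

/-- A divided power series lies in the `p`-adic completion `B⟨U⟩_pd` iff its coefficients
tend to `0` `p`-adically. -/
def pdTendsZero {B : Type*} [CommRing B] (p : ℕ) (f : ℕ → B) : Prop :=
  ∀ m : ℕ, ∃ N : ℕ, ∀ n ≥ N, f n ∈ Ideal.span {(p : B) ^ m}

lemma pdOpL_apply {B : Type*} [CommRing B] (b : B) (f : ℕ → B) (n : ℕ) :
    pdOpL b f n = f (n + 1) + n * b * f n := by
  unfold pdOpL pdMul pdOnePlusBU pdDeriv
  rw [Finset.Nat.sum_antidiagonal_eq_sum_range_succ_mk]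
  cases n with
  | zero => simp
  | succ m =>
    rw [Finset.sum_range_succ', Finset.sum_range_succ']
    simp [Nat.choose_one_right]
    ring

/-- The recursive solution to `(1+bU)∂/∂U f = g` with `f 0 = 0`. -/
def pdSolve {B : Type*} [CommRing B] (b : B) (g : ℕ → B) : ℕ → B
  | 0 => 0
  | n + 1 => g n - n * b * pdSolve b g n

lemma pdSolve_mem {B : Type*} [CommRing B] (b : B) (g : ℕ → B) (I : Ideal B)
    (Ng : ℕ) (hg : ∀ n ≥ Ng, g n ∈ I) :
    ∀ n : ℕ, ∃ u v : B, u ∈ I ∧ pdSolve b g (Ng + n + 1) = u + v * b ^ (n + 1) := by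
  intro n
  induction n with
  | zero =>
    refine ⟨g Ng, -((Ng : B) * pdSolve b g Ng), hg Ng le_rfl, ?_⟩
    simp [pdSolve]; ring
  | succ m ih =>
    obtain ⟨u, v, hu, hv⟩ := ih
    refine ⟨g (Ng + m + 1) - ((Ng + m + 1 : ℕ) : B) * b * u,
      -(((Ng + m + 1 : ℕ) : B) * v), ?_, ?_⟩
    · exact I.sub_mem (hg _ (by omega)) (I.mul_mem_left _ hu)
    · show pdSolve b g (Ng + m + 1 + 1) = _
      rw [pdSolve, hv]
      push_cast
      ring

/-- Let `B` be a `p`-adically complete and separated commutative ring and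
`b ∈ B` topologically nilpotent. Then the complex
`0 → B → B⟨U⟩_pd → B⟨U⟩_pd → 0`, with second map the inclusion of constants and third map
`(1+bU) ∂/∂U`, is exact: the inclusion of constants is injective, its image is exactly the
kernel of `(1+bU) ∂/∂U` on `B⟨U⟩_pd`, and `(1+bU) ∂/∂U` is surjective on `B⟨U⟩_pd`. -/
theorem stmt7 (p : ℕ) (hp : p.Prime) (B : Type*) [CommRing B]
    (hB : IsAdicComplete (Ideal.span {(p : B)}) B)
    (b : B) (hb : ∀ m : ℕ, ∃ N : ℕ, ∀ n ≥ N, b ^ n ∈ Ideal.span {(p : B) ^ m}) :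
    Function.Injective (pdC (B := B)) ∧
      (∀ f : ℕ → B, pdTendsZero p f →
        (pdOpL b f = (fun _ => (0 : B)) ↔ ∃ c : B, f = pdC c)) ∧
      (∀ g : ℕ → B, pdTendsZero p g →
        ∃ f : ℕ → B, pdTendsZero p f ∧ pdOpL b f = g) := by
  refine ⟨?_, ?_, ?_⟩
  · intro a a' h
    have := congrFun h 0
    simpa [pdC] using this
  · intro f _
    constructor
    · intro h
      refine ⟨f 0, funext fun n => ?_⟩
      have key : ∀ n : ℕ, f (n + 1) = 0 := by
        intro n
        induction n with
        | zero =>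
          have := congrFun h 0
          rw [pdOpL_apply] at this
          simpa using this
        | succ m ih =>
          have := congrFun h (m + 1)
          rw [pdOpL_apply, ih] at this
          simpa using this
      cases n with
      | zero => simp [pdC]
      | succ m => simp [pdC, key m]
    · rintro ⟨c, rfl⟩
      funext n
      rw [pdOpL_apply]
      cases n with
      | zero => simp [pdC]
      | succ m => simp [pdC]
  · intro g hg
    refine ⟨pdSolve b g, ?_, ?_⟩
    · intro m
      obtain ⟨Ng, hNg⟩ := hg m
      obtain ⟨Nb, hNb⟩ := hb m
      refine ⟨Ng + Nb + 1, fun n hn => ?_⟩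
      obtain ⟨u, v, hu, hv⟩ := pdSolve_mem b g _ Ng hNg (n - Ng - 1)
      have hn' : Ng + (n - Ng - 1) + 1 = n := by omega
      rw [hn'] at hv
      rw [hv]
      exact Ideal.add_mem _ hu (Ideal.mul_mem_left _ _ (hNb _ (by omega)))
    · funext n
      rw [pdOpL_apply]
      show pdSolve b g (n + 1) + _ = _
      rw [pdSolve]
      ring
end

section
/- Let $B$ be a $p$-adically complete separated ring, $u \in B^\times$ a unit. Consider $D = B\langle U_1, \dots, U_d\rangle_{pd}$ (the $p$-adically completed free pd-algebra) with the $B$-linear derivation $d = -\sum_{i=1}^d u \frac{\partial}{\partial U_i} \otimes dU_i : D \to \bigoplus_{i=1}^d D \cdot dU_i$. Then the augmented de Rham (Koszul) complex $0 \to B \to D \to \bigoplus_i D\, dU_i \to \bigwedge^2(\bigoplus_i D\, dU_i) \to \cdots$ is exact; equivalently, the Koszul complex $K(D; u\partial_{U_1}, \dots, u\partial_{U_d})$ has cohomology $B$ concentrated in degree $0$. -/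
/- We model the `p`-adic completion `D = B⟨U_1,…,U_d⟩_pd` of the free divided power
algebra by coefficient functions `(Fin d →₀ ℕ) → B` (coefficient of the pd-monomial
`U^[k]`), completed elements being those whose coefficients tend to `0` `p`-adically.
The total de Rham/Koszul complex `D → ⊕ᵢ D dUᵢ → Λ² → ⋯` for the differential
`d = -∑ᵢ u ∂/∂Uᵢ ⊗ dUᵢ` is modelled on `W := Finset (Fin d) → ((Fin d →₀ ℕ) → B)`
(the component at `S` of cardinality `k` being the coefficient of `dU_S` in degree `k`),
with the usual Koszul signs. -/

/-- Coefficients tending to zero `p`-adically. -/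
def mpdTendsZero {σ : Type*} {B : Type*} [CommRing B] (p : ℕ) (f : (σ →₀ ℕ) → B) : Prop :=
  ∀ m : ℕ, {k : σ →₀ ℕ | f k ∉ Ideal.span {(p : B) ^ m}}.Finite

/-- The total differential `d = -∑ᵢ u ∂/∂Uᵢ ⊗ dUᵢ` of the de Rham (Koszul) complex, with
Koszul signs: `(dω)_S = ∑_{i ∈ S} (-1)^{#{j ∈ S : j < i}} (-u ∂/∂Uᵢ) ω_{S \ {i}}`, where
`(∂/∂Uᵢ f)(k) = f (k + Eᵢ)`. -/
noncomputable def koszulD {B : Type*} [CommRing B] {d : ℕ} (u : B)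
    (ω : Finset (Fin d) → ((Fin d →₀ ℕ) → B)) :
    Finset (Fin d) → ((Fin d →₀ ℕ) → B) :=
  fun S k => ∑ i ∈ S,
    (-1 : B) ^ ((S.filter (fun j => j < i)).card) *
      (-(u * ω (S.erase i) (k + Finsupp.single i 1)))

open Classical in
/-- The inclusion `B → W` of constants in degree `0`. -/
noncomputable def koszulC {B : Type*} [CommRing B] {d : ℕ} (c : B) :
    Finset (Fin d) → ((Fin d →₀ ℕ) → B) :=
  fun S k => if S = ∅ ∧ k = 0 then c else 0

namespace Stmt13Aux

variable {B : Type*} [CommRing B] {d : ℕ}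

/-- Koszul sign. -/
def sg (S : Finset (Fin d)) (i : Fin d) : B := (-1 : B) ^ ((S.filter (fun j => j < i)).card)

lemma koszulD_apply (u : B) (ω : Finset (Fin d) → ((Fin d →₀ ℕ) → B)) (S : Finset (Fin d))
    (k : Fin d →₀ ℕ) :
    koszulD u ω S k = ∑ i ∈ S, sg S i * (-(u * ω (S.erase i) (k + Finsupp.single i 1))) := rfl

lemma sg_sq (S : Finset (Fin d)) (i : Fin d) : (sg S i : B) * sg S i = 1 := by
  unfold sg; rw [← pow_add, ← two_mul, pow_mul, neg_one_sq, one_pow]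

lemma sg_erase (S : Finset (Fin d)) {i j : Fin d} (h : ¬ j < i) :
    (sg (S.erase j) i : B) = sg S i := by
  unfold sg
  rw [Finset.filter_erase, Finset.erase_eq_of_notMem]
  exact fun hm => h (Finset.mem_filter.mp hm).2

lemma sg_insert_self (S : Finset (Fin d)) (i : Fin d) : (sg (insert i S) i : B) = sg S i := by
  unfold sg
  rw [Finset.filter_insert, if_neg (lt_irrefl i)]

lemma sg_swap {S : Finset (Fin d)} {i j : Fin d} (hi : i ∈ S) (hj : j ∈ S) (hij : i ≠ j) :
    (sg S i : B) * sg (S.erase i) j = -(sg S j * sg (S.erase j) i) := by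
  have key : ∀ {a b : ℕ}, 1 ≤ b → (-1 : B) ^ a * (-1) ^ (b - 1) = -((-1) ^ b * (-1) ^ a) := by
    intro a b hb
    conv_rhs => rw [show b = (b - 1) + 1 from (Nat.succ_pred_eq_of_pos hb).symm]
    rw [pow_succ]; ring
  rcases lt_or_gt_of_ne hij with hlt | hlt
  · have h1 : (sg (S.erase j) i : B) = sg S i := sg_erase S (not_lt.mpr hlt.le)
    have hi' : i ∈ S.filter (fun l => l < j) := Finset.mem_filter.mpr ⟨hi, hlt⟩
    have hcard : ((S.erase i).filter (fun l => l < j)).card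
        = (S.filter (fun l => l < j)).card - 1 := by
      rw [Finset.filter_erase, Finset.card_erase_of_mem hi']
    have hb : 1 ≤ (S.filter (fun l => l < j)).card := Finset.card_pos.mpr ⟨i, hi'⟩
    rw [h1]
    unfold sg
    rw [hcard]
    exact key hb
  · have h1 : (sg (S.erase i) j : B) = sg S j := sg_erase S (not_lt.mpr hlt.le)
    have hj' : j ∈ S.filter (fun l => l < i) := Finset.mem_filter.mpr ⟨hj, hlt⟩
    have hcard : ((S.erase j).filter (fun l => l < i)).card
        = (S.filter (fun l => l < i)).card - 1 := by
      rw [Finset.filter_erase, Finset.card_erase_of_mem hj']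
    have hb : 1 ≤ (S.filter (fun l => l < i)).card := Finset.card_pos.mpr ⟨j, hj'⟩
    rw [h1]
    unfold sg
    rw [hcard]
    have := key (a := (S.filter (fun l => l < j)).card)
      (b := (S.filter (fun l => l < i)).card) hb
    linear_combination this

/-- Integration in the variable `i`. -/
noncomputable def pint (i : Fin d) (f : (Fin d →₀ ℕ) → B) : (Fin d →₀ ℕ) → B :=
  fun k => if 1 ≤ k i then f (k - Finsupp.single i 1) else 0

/-- Projection killing everything involving `Uᵢ` or `dUᵢ`. -/
def PP (i : Fin d) (ω : Finset (Fin d) → ((Fin d →₀ ℕ) → B)) :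
    Finset (Fin d) → ((Fin d →₀ ℕ) → B) :=
  fun S k => if i ∈ S then 0 else if k i = 0 then ω S k else 0

/-- Contracting homotopy in the variable `i` (with `v = u⁻¹`). -/
noncomputable def hh (v : B) (i : Fin d) (ω : Finset (Fin d) → ((Fin d →₀ ℕ) → B)) :
    Finset (Fin d) → ((Fin d →₀ ℕ) → B) :=
  fun S k => if i ∈ S then 0 else sg S i * (-(v * pint i (ω (insert i S)) k))

lemma addE_self (k : Fin d →₀ ℕ) (i : Fin d) : (k + Finsupp.single i 1 : Fin d →₀ ℕ) i = k i + 1 := by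
  rw [Finsupp.add_apply, Finsupp.single_eq_same]

lemma addE_ne (k : Fin d →₀ ℕ) {i j : Fin d} (h : j ≠ i) :
    (k + Finsupp.single j 1 : Fin d →₀ ℕ) i = k i := by
  rw [Finsupp.add_apply, Finsupp.single_apply, if_neg h, add_zero]

lemma add_sub_E (k : Fin d →₀ ℕ) (i : Fin d) :
    k + Finsupp.single i 1 - Finsupp.single i 1 = k := add_tsub_cancel_right _ _

lemma sub_add_E {k : Fin d →₀ ℕ} {i : Fin d} (h : 1 ≤ k i) :
    k - Finsupp.single i 1 + Finsupp.single i 1 = k :=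
  tsub_add_cancel_of_le (Finsupp.single_le_iff.mpr h)

lemma sub_add_comm' (k : Fin d →₀ ℕ) {i j : Fin d} (h : j ≠ i) :
    k + Finsupp.single j 1 - Finsupp.single i 1
      = k - Finsupp.single i 1 + Finsupp.single j 1 := by
  ext l
  rw [Finsupp.tsub_apply, Finsupp.add_apply, Finsupp.add_apply, Finsupp.tsub_apply,
    Finsupp.single_apply, Finsupp.single_apply]
  split_ifs with h1 h2
  · exact absurd (h1.trans h2.symm) h
  all_goals omega

lemma mul_neg_mul_sum {α : Type*} (A u : B) (s : Finset α) (T : α → B) :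
    A * (-(u * ∑ m ∈ s, T m)) = ∑ m ∈ s, A * (-(u * T m)) := by
  rw [show A * (-(u * ∑ m ∈ s, T m)) = (A * -u) * ∑ m ∈ s, T m by ring, Finset.mul_sum]
  exact Finset.sum_congr rfl fun m _ => by ring


lemma koszulD_add (u : B) (ω₁ ω₂ : Finset (Fin d) → ((Fin d →₀ ℕ) → B)) (S : Finset (Fin d))
    (k : Fin d →₀ ℕ) :
    koszulD u (fun S k => ω₁ S k + ω₂ S k) S k = koszulD u ω₁ S k + koszulD u ω₂ S k := by
  rw [koszulD_apply, koszulD_apply, koszulD_apply, ← Finset.sum_add_distrib]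
  exact Finset.sum_congr rfl fun i _ => by ring

lemma koszulD_zero (u : B) :
    koszulD u (fun _ _ => (0 : B)) = fun (_ : Finset (Fin d)) (_ : Fin d →₀ ℕ) => (0 : B) := by
  funext S k
  rw [koszulD_apply]
  exact Finset.sum_eq_zero fun i _ => by ring

lemma koszulD_PP (u : B) (j : Fin d) (ω : Finset (Fin d) → ((Fin d →₀ ℕ) → B)) :
    koszulD u (PP j ω) = PP j (koszulD u ω) := by
  funext S k
  by_cases hj : j ∈ S
  · rw [koszulD_apply]
    have hz : ∀ m ∈ S, sg S m * (-(u * PP j ω (S.erase m) (k + Finsupp.single m 1))) = 0 := by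
      intro m hm
      by_cases hmj : m = j
      · subst hmj
        have : PP m ω (S.erase m) (k + Finsupp.single m 1) = 0 := by
          rw [PP, if_neg (Finset.notMem_erase m S), if_neg (by rw [addE_self]; omega)]
        rw [this]; ring
      · have hmem : j ∈ S.erase m := Finset.mem_erase.mpr ⟨fun h => hmj h.symm, hj⟩
        rw [PP, if_pos hmem]; ring
    rw [Finset.sum_eq_zero hz, PP, if_pos hj]
  · have hterm : ∀ m ∈ S, sg S m * (-(u * PP j ω (S.erase m) (k + Finsupp.single m 1)))
        = if k j = 0 then sg S m * (-(u * ω (S.erase m) (k + Finsupp.single m 1))) else 0 := by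
      intro m hm
      have hmj : m ≠ j := fun h => hj (h ▸ hm)
      have hj' : j ∉ S.erase m := fun h => hj (Finset.mem_of_mem_erase h)
      rw [PP, if_neg hj', addE_ne k hmj]
      by_cases hk : k j = 0
      · rw [if_pos hk, if_pos hk]
      · rw [if_neg hk, if_neg hk]; ring
    rw [koszulD_apply, Finset.sum_congr rfl hterm, PP, if_neg hj]
    by_cases hk : k j = 0
    · rw [if_pos hk, koszulD_apply]
      exact Finset.sum_congr rfl fun m hm => if_pos hk
    · rw [if_neg hk]
      exact Finset.sum_eq_zero fun m hm => if_neg hk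

lemma homotopy (u v : B) (hv : u * v = 1) (i : Fin d)
    (ω : Finset (Fin d) → ((Fin d →₀ ℕ) → B)) (S : Finset (Fin d)) (k : Fin d →₀ ℕ) :
    koszulD u (hh v i ω) S k + hh v i (koszulD u ω) S k = ω S k - PP i ω S k := by
  by_cases hiS : i ∈ S
  · have h2 : hh v i (koszulD u ω) S k = 0 := by rw [hh, if_pos hiS]
    have h3 : PP i ω S k = 0 := by rw [PP, if_pos hiS]
    rw [h2, h3, add_zero, sub_zero, koszulD_apply]
    rw [Finset.sum_eq_single_of_mem i hiS ?side]
    case side =>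
      intro m hm hmi
      have : i ∈ S.erase m := Finset.mem_erase.mpr ⟨fun h => hmi h.symm, hiS⟩
      rw [hh, if_pos this]; ring
    have hins : insert i (S.erase i) = S := Finset.insert_erase hiS
    have hsg : (sg (S.erase i) i : B) = sg S i := sg_erase S (lt_irrefl i)
    have hpt : pint i (ω S) (k + Finsupp.single i 1) = ω S k := by
      rw [pint, if_pos (by rw [addE_self]; omega), add_sub_E]
    have hhe : hh v i ω (S.erase i) (k + Finsupp.single i 1) = sg S i * (-(v * ω S k)) := by
      rw [hh, if_neg (Finset.notMem_erase i S), hins, hsg, hpt]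
    rw [hhe]
    have hsq := sg_sq (B := B) S i
    linear_combination (u * v * ω S k) * hsq + (ω S k) * hv
  · by_cases hki : k i = 0
    · have h2 : hh v i (koszulD u ω) S k = 0 := by
        rw [hh, if_neg hiS, pint, if_neg (by omega)]; ring
      have h1 : koszulD u (hh v i ω) S k = 0 := by
        rw [koszulD_apply]
        refine Finset.sum_eq_zero fun m hm => ?_
        have hmi : m ≠ i := fun h => hiS (h ▸ hm)
        have hi' : i ∉ S.erase m := fun h => hiS (Finset.mem_of_mem_erase h)
        rw [hh, if_neg hi', pint, if_neg (by rw [addE_ne k hmi]; omega)]; ring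
      rw [h1, h2, PP, if_neg hiS, if_pos hki]; ring
    · have hki' : 1 ≤ k i := by omega
      have hPP : PP i ω S k = 0 := by rw [PP, if_neg hiS, if_neg hki]
      rw [hPP, sub_zero]
      -- expand the `hh ∘ koszulD` term
      have hins : (insert i S).erase i = S := Finset.erase_insert hiS
      have hexp : hh v i (koszulD u ω) S k
          = sg S i * (-(v * (sg S i * (-(u * ω S k)))))
            + ∑ j ∈ S, sg S i * (-(v * (sg (insert i S) j *
                (-(u * ω ((insert i S).erase j)
                    (k - Finsupp.single i 1 + Finsupp.single j 1)))))) := by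
        rw [hh, if_neg hiS, pint, if_pos hki', koszulD_apply, Finset.sum_insert hiS,
          sg_insert_self, hins, sub_add_E hki']
        rw [show ∀ X T : B, sg S i * (-(v * (X + T)))
            = sg S i * (-(v * X)) + sg S i * (-(v * T)) from fun X T => by ring]
        rw [mul_neg_mul_sum]
      rw [hexp, koszulD_apply]
      rw [show ∀ X Y Z : B, X + (Y + Z) = (X + Z) + Y from fun X Y Z => by ring,
        ← Finset.sum_add_distrib]
      have hzero : ∀ j ∈ S,
          sg S j * (-(u * hh v i ω (S.erase j) (k + Finsupp.single j 1)))
            + sg S i * (-(v * (sg (insert i S) j *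
                (-(u * ω ((insert i S).erase j)
                    (k - Finsupp.single i 1 + Finsupp.single j 1)))))) = 0 := by
        intro j hj
        have hji : j ≠ i := fun h => hiS (h ▸ hj)
        have hij : i ≠ j := fun h => hji h.symm
        have hi' : i ∉ S.erase j := fun h => hiS (Finset.mem_of_mem_erase h)
        have hset : insert i (S.erase j) = (insert i S).erase j :=
          (Finset.erase_insert_of_ne hij).symm
        have hpt : pint i (ω (insert i (S.erase j))) (k + Finsupp.single j 1)
            = ω ((insert i S).erase j) (k - Finsupp.single i 1 + Finsupp.single j 1) := by
          rw [pint, if_pos (by rw [addE_ne k hji]; omega), sub_add_comm' k hji, hset]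
        have hhe : hh v i ω (S.erase j) (k + Finsupp.single j 1)
            = sg (S.erase j) i *
                (-(v * ω ((insert i S).erase j)
                    (k - Finsupp.single i 1 + Finsupp.single j 1))) := by
          rw [hh, if_neg hi', hpt]
        rw [hhe]
        -- sign identity
        have R := sg_swap (B := B) (S := insert i S) (Finset.mem_insert_self i S)
          (Finset.mem_insert_of_mem hj) hij
        rw [sg_insert_self, hins] at R
        have hset2 : (insert i S).erase j = insert i (S.erase j) :=
          Finset.erase_insert_of_ne hij
        rw [hset2, sg_insert_self] at R
        -- R : sg S i * sg S j = -(sg (insert i S) j * sg (S.erase j) i)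
        have h1 := sg_sq (B := B) S i
        have h2 := sg_sq (B := B) (S.erase j) i
        have hx : (sg S j : B) * sg (S.erase j) i = -(sg S i * sg (insert i S) j) := by
          linear_combination (sg S i * sg (S.erase j) i) * R
            - (sg S j * sg (S.erase j) i) * h1 - (sg S i * sg (insert i S) j) * h2
        linear_combination
          (u * v * ω ((insert i S).erase j) (k - Finsupp.single i 1 + Finsupp.single j 1)) * hx
      rw [Finset.sum_eq_zero hzero, zero_add]
      have hsq := sg_sq (B := B) S i
      linear_combination (v * u * ω S k) * hsq + (ω S k) * hv


noncomputable def Qn : ℕ → (Finset (Fin d) → ((Fin d →₀ ℕ) → B)) →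
    (Finset (Fin d) → ((Fin d →₀ ℕ) → B))
  | 0, ω => ω
  | n + 1, ω => if h : n < d then PP ⟨n, h⟩ (Qn n ω) else Qn n ω

noncomputable def Hn (v : B) : ℕ → (Finset (Fin d) → ((Fin d →₀ ℕ) → B)) →
    (Finset (Fin d) → ((Fin d →₀ ℕ) → B))
  | 0, _ => fun _ _ => 0
  | n + 1, ω =>
    if h : n < d then (fun S k => Hn v n ω S k + hh v ⟨n, h⟩ (Qn n ω) S k) else Hn v n ω

lemma Qn_koszulD (u : B) (n : ℕ) (ω : Finset (Fin d) → ((Fin d →₀ ℕ) → B)) :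
    koszulD u (Qn n ω) = Qn n (koszulD u ω) := by
  induction n with
  | zero => rfl
  | succ n IH =>
    rw [Qn, Qn]
    by_cases h : n < d
    · rw [dif_pos h, dif_pos h, ← IH, koszulD_PP]
    · rw [dif_neg h, dif_neg h, IH]

lemma main_htpy (u v : B) (hv : u * v = 1) (n : ℕ)
    (ω : Finset (Fin d) → ((Fin d →₀ ℕ) → B)) (S : Finset (Fin d)) (k : Fin d →₀ ℕ) :
    ω S k - Qn n ω S k
      = koszulD u (Hn v n ω) S k + Hn v n (koszulD u ω) S k := by
  induction n with
  | zero =>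
    show ω S k - ω S k = koszulD u (fun _ _ => (0 : B)) S k + 0
    rw [koszulD_zero]
    simp
  | succ n IH =>
    rw [Qn, Hn, Hn]
    by_cases h : n < d
    · rw [dif_pos h, dif_pos h, dif_pos h]
      have Hh := homotopy u v hv ⟨n, h⟩ (Qn n ω) S k
      rw [Qn_koszulD] at Hh
      rw [koszulD_add]
      linear_combination IH - Hh
    · rw [dif_neg h, dif_neg h, dif_neg h]
      exact IH

open Classical in
lemma Qn_spec (n : ℕ) (ω : Finset (Fin d) → ((Fin d →₀ ℕ) → B)) (S : Finset (Fin d))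
    (k : Fin d →₀ ℕ) :
    Qn n ω S k
      = if (∀ j ∈ S, n ≤ (j : Fin d).val) ∧ (∀ j : Fin d, j.val < n → k j = 0)
        then ω S k else 0 := by
  induction n with
  | zero =>
    rw [Qn, if_pos]
    exact ⟨fun j _ => Nat.zero_le _, fun j hj => absurd hj (Nat.not_lt_zero _)⟩
  | succ n IH =>
    rw [Qn]
    by_cases h : n < d
    · rw [dif_pos h, PP, IH]
      set i : Fin d := ⟨n, h⟩ with hi
      have hiv : i.val = n := rfl
      by_cases h1 : i ∈ S
      · rw [if_pos h1, eq_comm, if_neg]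
        rintro ⟨hA, -⟩
        have := hA i h1
        omega
      · rw [if_neg h1]
        by_cases h2 : k i = 0
        · rw [if_pos h2]
          refine if_congr ⟨?_, ?_⟩ rfl rfl
          · rintro ⟨hA, hB⟩
            refine ⟨fun j hj => ?_, fun j hj => ?_⟩
            · have hn := hA j hj
              rcases Nat.eq_or_lt_of_le hn with heq | hlt
              · have hji : j = i := Fin.ext (by omega)
                exact absurd (hji ▸ hj) h1
              · omega
            · rcases Nat.lt_or_ge j.val n with hlt | hge
              · exact hB j hlt
              · have hji : j = i := Fin.ext (by omega)
                rw [hji]; exact h2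
          · rintro ⟨hA, hB⟩
            exact ⟨fun j hj => by have := hA j hj; omega,
                   fun j hj => hB j (by omega)⟩
        · rw [if_neg h2, eq_comm, if_neg]
          rintro ⟨-, hB⟩
          exact h2 (hB i (by omega))
    · rw [dif_neg h, IH]
      refine if_congr ⟨?_, ?_⟩ rfl rfl
      · rintro ⟨hA, hB⟩
        refine ⟨fun j hj => ?_, fun j hj => hB j (by omega)⟩
        have := hA j hj
        have := j.isLt
        omega
      · rintro ⟨hA, hB⟩
        refine ⟨fun j hj => by have := hA j hj; have := j.isLt; omega,
               fun j hj => hB j (by have := j.isLt; omega)⟩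

open Classical in
lemma Qn_top (ω : Finset (Fin d) → ((Fin d →₀ ℕ) → B)) (S : Finset (Fin d))
    (k : Fin d →₀ ℕ) : Qn d ω S k = koszulC (ω ∅ 0) S k := by
  rw [Qn_spec, koszulC]
  by_cases hS : S = ∅
  · subst hS
    by_cases hk : k = 0
    · subst hk
      rw [if_pos (⟨fun j hj => absurd hj (Finset.notMem_empty j), fun j _ => rfl⟩ :
          (∀ j ∈ (∅ : Finset (Fin d)), d ≤ j.val)
            ∧ (∀ j : Fin d, j.val < d → (0 : Fin d →₀ ℕ) j = 0)),
        if_pos (⟨rfl, rfl⟩ : (∅ : Finset (Fin d)) = ∅ ∧ (0 : Fin d →₀ ℕ) = 0)]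
    · rw [if_neg (fun h => hk (Finsupp.ext fun j => h.2 j j.isLt)),
        if_neg (fun (h : (∅ : Finset (Fin d)) = ∅ ∧ k = 0) => hk h.2)]
  · rw [if_neg (fun (h : S = ∅ ∧ k = 0) => hS h.1), if_neg]
    rintro ⟨hA, -⟩
    obtain ⟨j, hj⟩ := Finset.nonempty_iff_ne_empty.mpr hS
    have := hA j hj
    have := j.isLt
    omega

lemma Qn_zero (n : ℕ) : Qn n (fun _ _ => (0 : B)) = fun (_ : Finset (Fin d)) _ => (0 : B) := by
  induction n with
  | zero => rfl
  | succ n IH =>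
    rw [Qn]
    by_cases h : n < d
    · rw [dif_pos h, IH]
      funext S k
      rw [PP]
      split_ifs <;> rfl
    · rw [dif_neg h, IH]

lemma Hn_zero (v : B) (n : ℕ) :
    Hn v n (fun _ _ => (0 : B)) = fun (_ : Finset (Fin d)) _ => (0 : B) := by
  induction n with
  | zero => rfl
  | succ n IH =>
    rw [Hn]
    by_cases h : n < d
    · rw [dif_pos h, IH, Qn_zero]
      funext S k
      rw [hh]
      split_ifs with h1
      · simp
      · rw [pint]
        split_ifs <;> ring
    · rw [dif_neg h, IH]


section mpd

variable {p : ℕ}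

lemma mpd_zero : mpdTendsZero (σ := Fin d) (B := B) p (fun _ => 0) := fun m =>
  Set.Finite.subset Set.finite_empty (fun k hk => (hk (Ideal.zero_mem _)).elim)

lemma mpd_of {f g : (Fin d →₀ ℕ) → B} (hg : mpdTendsZero p g)
    (h : ∀ (r : B) (k : Fin d →₀ ℕ), g k ∈ Ideal.span {r} → f k ∈ Ideal.span {r}) :
    mpdTendsZero p f := fun m =>
  Set.Finite.subset (hg m) (fun k hk hgk => hk (h _ k hgk))

lemma mpd_add {f g : (Fin d →₀ ℕ) → B} (hf : mpdTendsZero p f) (hg : mpdTendsZero p g) :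
    mpdTendsZero p (fun k => f k + g k) := fun m => by
  refine Set.Finite.subset ((hf m).union (hg m)) (fun k hk => ?_)
  by_cases h1 : f k ∈ Ideal.span {(p : B) ^ m}
  · by_cases h2 : g k ∈ Ideal.span {(p : B) ^ m}
    · exact (hk (Ideal.add_mem _ h1 h2)).elim
    · exact Or.inr h2
  · exact Or.inl h1

lemma mpd_pint {f : (Fin d →₀ ℕ) → B} (i : Fin d) (hf : mpdTendsZero p f) :
    mpdTendsZero p (pint i f) := fun m => by
  refine Set.Finite.subset ((hf m).image (· + Finsupp.single i 1)) (fun k hk => ?_)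
  by_cases h : 1 ≤ k i
  · refine ⟨k - Finsupp.single i 1, ?_, sub_add_E h⟩
    simpa [pint, if_pos h] using hk
  · exact (hk (by rw [pint, if_neg h]; exact Ideal.zero_mem _)).elim

lemma mpd_PP {ω : Finset (Fin d) → ((Fin d →₀ ℕ) → B)} (i : Fin d)
    (hω : ∀ S, mpdTendsZero p (ω S)) (S : Finset (Fin d)) :
    mpdTendsZero p (PP i ω S) := by
  refine mpd_of (hω S) fun r k hk => ?_
  rw [PP]
  split_ifs
  · exact Ideal.zero_mem _
  · exact hk
  · exact Ideal.zero_mem _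

lemma mpd_hh {ω : Finset (Fin d) → ((Fin d →₀ ℕ) → B)} (v : B) (i : Fin d)
    (hω : ∀ S, mpdTendsZero p (ω S)) (S : Finset (Fin d)) :
    mpdTendsZero p (hh v i ω S) := by
  by_cases hiS : i ∈ S
  · have : hh v i ω S = fun _ => 0 := by
      funext k; rw [hh, if_pos hiS]
    rw [this]; exact mpd_zero
  · have : hh v i ω S = fun k => sg S i * (-(v * pint i (ω (insert i S)) k)) := by
      funext k; rw [hh, if_neg hiS]
    rw [this]
    refine mpd_of (mpd_pint i (hω (insert i S))) fun r k hk => ?_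
    exact Ideal.mul_mem_left _ _ (neg_mem (Ideal.mul_mem_left _ _ hk))

lemma mpd_Qn {ω : Finset (Fin d) → ((Fin d →₀ ℕ) → B)} (n : ℕ)
    (hω : ∀ S, mpdTendsZero p (ω S)) (S : Finset (Fin d)) :
    mpdTendsZero p (Qn n ω S) := by
  induction n generalizing S with
  | zero => exact hω S
  | succ n IH =>
    rw [Qn]
    by_cases h : n < d
    · rw [dif_pos h]
      exact mpd_PP _ (fun S => IH S) S
    · rw [dif_neg h]
      exact IH S

lemma mpd_Hn {ω : Finset (Fin d) → ((Fin d →₀ ℕ) → B)} (v : B) (n : ℕ)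
    (hω : ∀ S, mpdTendsZero p (ω S)) (S : Finset (Fin d)) :
    mpdTendsZero p (Hn v n ω S) := by
  induction n generalizing S with
  | zero => exact mpd_zero
  | succ n IH =>
    rw [Hn]
    by_cases h : n < d
    · rw [dif_pos h]
      exact mpd_add (IH S) (mpd_hh v _ (fun S => mpd_Qn n hω S) S)
    · rw [dif_neg h]
      exact IH S

end mpd

lemma koszulD_sq (u : B) (ω : Finset (Fin d) → ((Fin d →₀ ℕ) → B)) :
    koszulD u (koszulD u ω) = fun (_ : Finset (Fin d)) (_ : Fin d →₀ ℕ) => (0 : B) := by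
  funext S k
  rw [koszulD_apply]
  have hterm : ∀ j ∈ S, sg S j * (-(u * koszulD u ω (S.erase j) (k + Finsupp.single j 1)))
      = ∑ m ∈ S.erase j, sg S j * (-(u * (sg (S.erase j) m *
          (-(u * ω ((S.erase j).erase m)
              (k + Finsupp.single j 1 + Finsupp.single m 1)))))) := by
    intro j hj
    rw [koszulD_apply, mul_neg_mul_sum]
  rw [Finset.sum_congr rfl hterm, Finset.sum_sigma']
  refine Finset.sum_involution (fun x _ => ⟨x.2, x.1⟩) ?_ ?_ ?_ ?_
  · rintro ⟨j, m⟩ hx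
    obtain ⟨h1, h2⟩ := Finset.mem_sigma.mp hx
    have hmj : m ≠ j := (Finset.mem_erase.mp h2).1
    have hm : m ∈ S := Finset.mem_of_mem_erase h2
    have e1 : (S.erase m).erase j = (S.erase j).erase m := Finset.erase_right_comm
    have e2 : k + Finsupp.single m 1 + Finsupp.single j 1
        = k + Finsupp.single j 1 + Finsupp.single m 1 := add_right_comm _ _ _
    simp only
    rw [e1, e2]
    have hswap := sg_swap (B := B) (S := S) h1 hm (fun h => hmj h.symm)
    linear_combination
      (u * u * ω ((S.erase j).erase m) (k + Finsupp.single j 1 + Finsupp.single m 1)) * hswap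
  · rintro ⟨j, m⟩ hx -
    obtain ⟨h1, h2⟩ := Finset.mem_sigma.mp hx
    intro heq
    exact (Finset.mem_erase.mp h2).1 (congrArg Sigma.fst heq)
  · rintro ⟨j, m⟩ hx
    obtain ⟨h1, h2⟩ := Finset.mem_sigma.mp hx
    exact Finset.mem_sigma.mpr ⟨Finset.mem_of_mem_erase h2,
      Finset.mem_erase.mpr ⟨fun h => (Finset.mem_erase.mp h2).1 h.symm, h1⟩⟩
  · rintro ⟨j, m⟩ hx
    rfl

end Stmt13Aux

/-- Let `B` be a `p`-adically complete separated ring and `u ∈ B` a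
unit. The augmented de Rham (Koszul) complex
`0 → B → D → ⊕ᵢ D dUᵢ → Λ²(⊕ᵢ D dUᵢ) → ⋯` for `d = -∑ᵢ u ∂/∂Uᵢ ⊗ dUᵢ` on
`D = B⟨U_1,…,U_d⟩_pd` is exact; equivalently, on the total complex `W` restricted to the
completion: constants inject, `d ∘ (const) = 0`, `d ∘ d = 0`, and every completed cocycle
is a constant plus a completed coboundary (i.e. the cohomology is `B` in degree `0`). -/


theorem stmt13 (p : ℕ) (hp : p.Prime) (B : Type*) [CommRing B]
    (hB : IsAdicComplete (Ideal.span {(p : B)}) B)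
    (d : ℕ) (u : B) (hu : IsUnit u) :
    Function.Injective (koszulC (B := B) (d := d)) ∧
      (∀ c : B, koszulD u (koszulC (d := d) c) = fun _ _ => 0) ∧
      (∀ ω : Finset (Fin d) → ((Fin d →₀ ℕ) → B),
        (∀ S, mpdTendsZero p (ω S)) → koszulD u (koszulD u ω) = fun _ _ => 0) ∧
      (∀ ω : Finset (Fin d) → ((Fin d →₀ ℕ) → B),
        (∀ S, mpdTendsZero p (ω S)) → koszulD u ω = (fun _ _ => 0) →
          ∃ (c : B) (η : Finset (Fin d) → ((Fin d →₀ ℕ) → B)),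
            (∀ S, mpdTendsZero p (η S)) ∧
            ω = fun S k => koszulC c S k + koszulD u η S k) := by
  classical
  obtain ⟨w, hw⟩ := hu
  set v : B := ((w⁻¹ : Bˣ) : B) with hv'
  have hv : u * v = 1 := by
    rw [← hw, hv']
    exact_mod_cast w.mul_inv
  refine ⟨?_, ?_, ?_, ?_⟩
  · intro c₁ c₂ h
    have := congrFun (congrFun h (∅ : Finset (Fin d))) (0 : Fin d →₀ ℕ)
    simpa [koszulC] using this
  · intro c
    funext S k
    rw [Stmt13Aux.koszulD_apply]
    refine Finset.sum_eq_zero fun i hi => ?_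
    have hz : koszulC c (S.erase i) (k + Finsupp.single i 1) = 0 := by
      rw [koszulC, if_neg]
      rintro ⟨-, hk⟩
      have := DFunLike.congr_fun hk i
      rw [Stmt13Aux.addE_self] at this
      simp at this
    rw [hz]; ring
  · intro ω _
    exact Stmt13Aux.koszulD_sq u ω
  · intro ω hω hcocycle
    refine ⟨ω ∅ 0, Stmt13Aux.Hn v d ω, fun S => Stmt13Aux.mpd_Hn v d hω S, ?_⟩
    funext S k
    have hmain := Stmt13Aux.main_htpy u v hv d ω S k
    rw [hcocycle, Stmt13Aux.Hn_zero, Stmt13Aux.Qn_top] at hmain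
    linear_combination hmain
end
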